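/- Let β = (b^h) be a rectangular partition and μ ⊆ λ ⊆ β with rotated complements λ̂ ⊆ μ̂ ⊆ β. Then c'_{λ,μ}(α)/c'_{β,μ}(α) = c'_{μ̂,λ̂}(α)/c'_{β,λ̂}(α), where c'_{λ,μ}(α) = ∏_{s∈μ} ((a_{λ,s}+1)α + ℓ_{μ,s}). -/

import Mathlib

open scoped Classical
open Finset

noncomputable section

/-- A partition: an antitone, eventually-zero sequence of naturals.
`part i` is the `(i+1)`-st part (0-indexed). -/
structure JPartition where
  part : ℕ → ℕ
  antitone' : Antitone part
  finite' : ∃ N, ∀ n, N ≤ n → part n = 0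

namespace JPartition

/-- The size `|λ|` of a partition. -/
def size (l : JPartition) : ℕ := ∑ᶠ i, l.part i

/-- The length (number of nonzero parts). -/
def length (l : JPartition) : ℕ := Nat.card {i | 0 < l.part i}

/-- The multiplicity of `k` as a part. -/
def mult (l : JPartition) (k : ℕ) : ℕ := Nat.card {i | l.part i = k}

/-- The parts of the conjugate (transposed) partition. -/
def conjPart (l : JPartition) (j : ℕ) : ℕ := Nat.card {i | j < l.part i}

lemma finite_set (l : JPartition) (j : ℕ) : {i | j < l.part i}.Finite := by
  obtain ⟨N, hN⟩ := l.finite'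
  refine Set.Finite.subset (Set.finite_Iio N) ?_
  intro i hi
  simp only [Set.mem_setOf_eq] at hi
  by_contra hc
  simp only [Set.mem_Iio, not_lt] at hc
  have := hN i hc
  omega

/-- The conjugate (transposed) partition. -/
def conj (l : JPartition) : JPartition where
  part := l.conjPart
  antitone' := by
    intro a b hab
    exact Nat.card_mono (l.finite_set a) (fun i hi => lt_of_le_of_lt hab hi)
  finite' := by
    refine ⟨l.part 0 + 1, fun n hn => ?_⟩
    have he : {i | n < l.part i} = (∅ : Set ℕ) := by
      ext i
      simp only [Set.mem_setOf_eq, Set.mem_empty_iff_false, iff_false, not_lt]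
      calc l.part i ≤ l.part 0 := l.antitone' (Nat.zero_le i)
        _ ≤ n := by omega
    unfold conjPart
    rw [he]
    simp

/-- The arm of the (0-indexed) box `s = (i,j)` of `λ`. -/
def arm (l : JPartition) (s : ℕ × ℕ) : ℤ := (l.part s.1 : ℤ) - s.2 - 1

/-- The leg of the (0-indexed) box `s = (i,j)` of `λ`. -/
def leg (l : JPartition) (s : ℕ × ℕ) : ℤ := (l.conjPart s.2 : ℤ) - s.1 - 1

/-- Containment of partitions: `m ⊆ l`. -/
def sub (m l : JPartition) : Prop := ∀ i, m.part i ≤ l.part i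

/-- Dominance order on partitions (of the same size). -/
def domLE (m l : JPartition) : Prop :=
  m.size = l.size ∧ ∀ k, ∑ i ∈ Finset.range k, m.part i ≤ ∑ i ∈ Finset.range k, l.part i

end JPartition

/-- The rectangular partition `(b^h)`. -/
def rect (b h : ℕ) : JPartition where
  part := fun i => if i < h then b else 0
  antitone' := by
    intro x y hxy
    by_cases hy : y < h
    · have hx : x < h := lt_of_le_of_lt hxy hy
      simp [hx, hy]
    · simp [hy]
  finite' := ⟨h, fun n hn => if_neg (by omega)⟩

/-- The rotated complement of `λ` inside the rectangle `(b^h)`. -/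
def rotC (b h : ℕ) (l : JPartition) : JPartition where
  part := fun i => if i < h then b - l.part (h - 1 - i) else 0
  antitone' := by
    intro x y hxy
    by_cases hy : y < h
    · have hx : x < h := lt_of_le_of_lt hxy hy
      simp only [if_pos hx, if_pos hy]
      exact Nat.sub_le_sub_left (l.antitone' (show h - 1 - y ≤ h - 1 - x by omega)) b
    · simp [hy]
  finite' := ⟨h, fun n hn => if_neg (by omega)⟩

/-- The empty partition. -/
def emptyP : JPartition := ⟨fun _ => 0, fun _ _ _ => le_rfl, ⟨0, fun _ _ => rfl⟩⟩

/-- The field `ℚ(α)` of rational functions in the Jack parameter. -/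
abbrev K : Type := RatFunc ℚ

/-- The Jack parameter `α`, an indeterminate. -/
def alpha : K := RatFunc.X

/-- Product of `f` over all boxes of the partition `l`. -/
def boxProdM {M : Type*} [CommMonoid M] (l : JPartition) (f : ℕ × ℕ → M) : M :=
  ∏ᶠ i, ∏ j ∈ Finset.range (l.part i), f (i, j)

/-- Number of boxes of `l` satisfying `f`. -/
def boxCount (l : JPartition) (f : ℕ × ℕ → Prop) : ℕ :=
  ∑ᶠ i, ∑ j ∈ Finset.range (l.part i), if f (i, j) then 1 else 0

/-- `c_{λ,s}(α) = a_{λ,s} α + ℓ_{λ,s} + 1`. -/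
def cBox (l : JPartition) (s : ℕ × ℕ) : K := (l.arm s : K) * alpha + (l.leg s : K) + 1

/-- `c'_{λ,s}(α) = (a_{λ,s}+1) α + ℓ_{λ,s}`. -/
def cBox' (l : JPartition) (s : ℕ × ℕ) : K := ((l.arm s : K) + 1) * alpha + (l.leg s : K)

/-- `c_λ(α)`. -/
def cFun (l : JPartition) : K := boxProdM l (cBox l)

/-- `c'_λ(α)`. -/
def cFun' (l : JPartition) : K := boxProdM l (cBox' l)

/-- `c_λ(t)` evaluated at an arbitrary `t`. -/
def cFunAt (l : JPartition) (t : K) : K :=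
  boxProdM l (fun s => (l.arm s : K) * t + (l.leg s : K) + 1)

/-- `c_{μ,λ}(α) = ∏_{s∈μ} (a_{μ,s} α + ℓ_{λ,s} + 1)`. -/
def cMix (m l : JPartition) : K :=
  boxProdM m (fun s => (m.arm s : K) * alpha + (l.leg s : K) + 1)

/-- `c_{μ,λ}(t)` at an arbitrary `t`. -/
def cMixAt (m l : JPartition) (t : K) : K :=
  boxProdM m (fun s => (m.arm s : K) * t + (l.leg s : K) + 1)

/-- `c'_{λ,μ}(α) = ∏_{s∈μ} ((a_{λ,s}+1) α + ℓ_{μ,s})`. -/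
def cMix' (l m : JPartition) : K :=
  boxProdM m (fun s => ((l.arm s : K) + 1) * alpha + (m.leg s : K))

/-- The ring in which symmetric functions live: formal power series in
countably many variables over `ℚ(α)`. -/
abbrev SymF : Type := MvPowerSeries ℕ K

/-- The monomial symmetric function `m_λ`. -/
def msf (l : JPartition) : SymF :=
  fun e => if ∀ k, 0 < k → Nat.card {i | e i = k} = l.mult k then 1 else 0

/-- The power sum symmetric function `p_r`. -/
def psf (r : ℕ) : SymF :=
  fun e => if ∃ i, e = Finsupp.single i r then 1 else 0

/-- The power sum symmetric function `p_λ = ∏ p_{λ_i}`. -/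
def pProd (l : JPartition) : SymF :=
  ∏ᶠ i, if l.part i = 0 then 1 else psf (l.part i)

/-- `z_λ = ∏_k k^{m_k} m_k!`. -/
def zNum (l : JPartition) : ℕ :=
  ∏ᶠ k, if 0 < k then k ^ l.mult k * (l.mult k).factorial else 1

/-- `u_λ = ∏_k m_k!`. -/
def uNum (l : JPartition) : ℕ :=
  ∏ᶠ k, if 0 < k then (l.mult k).factorial else 1

/-- `x ∈ ℚ(α)` is a polynomial in `α` with nonnegative integer coefficients. -/
def IsNonnegPoly (x : K) : Prop :=
  ∃ P : Polynomial ℕ, x = algebraMap (Polynomial ℚ) K (P.map (Nat.castRingHom ℚ))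

/-- The data of the Jack symmetric functions at parameter `t`: a symmetric
bilinear form with `⟨p_λ,p_μ⟩ = δ_{λμ} z_λ t^{ℓ(λ)}`, and the family `J_λ`,
pairwise orthogonal, triangular with respect to the monomial symmetric
functions in dominance order, normalized by `v_{λ,(1^n)} = n!`. -/
structure JackFamily (t : K) where
  inner : SymF →ₗ[K] SymF →ₗ[K] K
  inner_symm : ∀ f g, inner f g = inner g f
  inner_p : ∀ l m : JPartition,
    inner (pProd l) (pProd m) = if l = m then (zNum l : K) * t ^ l.length else 0
  J : JPartition → SymF
  v : JPartition → JPartition → K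
  J_eq : ∀ l, J l = ∑ᶠ m : JPartition, v l m • msf m
  v_tri : ∀ l m, v l m ≠ 0 → JPartition.domLE m l
  v_norm : ∀ l : JPartition, v l (rect 1 l.size) = (Nat.factorial l.size : K)
  orth : ∀ l m, l ≠ m → inner (J l) (J m) = 0

/-- The Jack family together with the skew Jack symmetric functions
`J_{λ/μ}`, characterized by `⟨J_{λ/μ}, J_ν⟩ = ⟨J_λ, J_μ J_ν⟩`, lying in the
span of the `J_ν`, with monomial expansion coefficients `vskew`. -/
structure JackSystem (t : K) extends JackFamily t where
  skewJ : JPartition → JPartition → SymF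
  vskew : JPartition → JPartition → JPartition → K
  skew_eq : ∀ l m, skewJ l m = ∑ᶠ n : JPartition, vskew l m n • msf n
  skew_def : ∀ l m n, inner (skewJ l m) (J n) = inner (J l) (J m * J n)
  skew_mem : ∀ l m, skewJ l m ∈ Submodule.span K (Set.range J)

/-- Stanley's polynomial `g^λ_{μν} = ⟨J_λ, J_μ J_ν⟩`. -/
def gpoly {t : K} (D : JackFamily t) (l m n : JPartition) : K :=
  D.inner (D.J l) (D.J m * D.J n)

/-- The set of boxes of the skew diagram `λ/μ` in the plane `ℤ × ℤ`. -/
def skewSet (l m : JPartition) : Set (ℤ × ℤ) :=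
  {s | 0 ≤ s.1 ∧ 0 ≤ s.2 ∧ m.part s.1.toNat ≤ s.2.toNat ∧ s.2.toNat < l.part s.1.toNat}

/-- The diagrams of `λ/μ` and `λ̃/μ̃` coincide up to translation. -/
def SameUpToTranslation (l m tl tm : JPartition) : Prop :=
  ∃ d : ℤ × ℤ, skewSet tl tm = (fun s => s + d) '' skewSet l m

section Stmt5Aux

noncomputable def lin (p q : ℤ) : K := (p : K) * alpha + (q : K)

lemma lin_ne_zero {p q : ℤ} (hp : p ≠ 0) : lin p q ≠ 0 := by
  have heq : lin p q = algebraMap (Polynomial ℚ) K (Polynomial.C (p:ℚ) * Polynomial.X + Polynomial.C (q:ℚ)) := by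
    simp [lin, alpha, map_add, map_mul, RatFunc.algebraMap_X, RatFunc.algebraMap_C]
  rw [heq]
  apply RatFunc.algebraMap_ne_zero
  intro hc
  have h1 := congrArg (fun P => Polynomial.coeff P 1) hc
  simp only [Polynomial.coeff_add, Polynomial.coeff_C_mul, Polynomial.coeff_X_one,
    Polynomial.coeff_C, mul_one, Polynomial.coeff_zero] at h1
  simp at h1
  exact hp (by exact_mod_cast h1)

lemma prod_update_point {s : Finset ℕ} {i : ℕ} (hi : i ∈ s) (f g : ℕ → K)
    (hfg : ∀ j ∈ s, j ≠ i → f j = g j) :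
    (∏ j ∈ s, f j) * g i = (∏ j ∈ s, g j) * f i := by
  rw [← Finset.mul_prod_erase s f hi, ← Finset.mul_prod_erase s g hi,
    Finset.prod_congr rfl (fun j hj => hfg j (Finset.mem_of_mem_erase hj) (Finset.ne_of_mem_erase hj))]
  ring

def Cnt (h : ℕ) (f : ℕ → ℕ) (j : ℕ) : ℕ :=
  ((Finset.range h).filter (fun i => j < f i)).card
lemma inner_core (L i0 h : ℕ) (hi0 : i0 < h) :
    ∀ S : ℕ, ∀ mu : ℕ → ℕ,
      (∀ i j, i ≤ j → j < h → mu j ≤ mu i) → mu i0 ≤ L →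
      (∑ i ∈ Ico (i0+1) h, mu i) = S →
      (∏ j ∈ range (mu i0), lin ((L:ℤ) - j) ((Cnt h mu j : ℤ) - i0 - 1))
        * (∏ i ∈ Ico i0 h, lin ((L:ℤ)+1) ((i:ℤ) - i0))
        * (∏ i ∈ Ico (i0+1) h, lin ((L:ℤ)+1 - mu i) ((i:ℤ) - i0 - 1))
      = (∏ j ∈ range (mu i0), lin ((L:ℤ)+1 - j) ((Cnt h mu j:ℤ) - i0 - 1))
        * (∏ i ∈ Ico (i0+1) h, lin ((L:ℤ)+1) ((i:ℤ) - i0 - 1))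
        * (∏ i ∈ Ico i0 h, lin ((L:ℤ)+1 - mu i) ((i:ℤ) - i0)) := by
  intro S
  induction S using Nat.strong_induction_on with
  | _ S IH =>
  intro mu hanti hmuL hS
  by_cases hz : ∀ i ∈ Ico (i0+1) h, mu i = 0
  · -- base case
    have hCnt : ∀ j < mu i0, Cnt h mu j = i0 + 1 := by
      intro j hj
      unfold Cnt
      have : (range h).filter (fun i => j < mu i) = range (i0+1) := by
        ext i
        simp only [mem_filter, mem_range]
        constructor
        · rintro ⟨hih, hji⟩
          by_contra hc
          push_neg at hc
          have : mu i = 0 := hz i (by simp [mem_Ico]; omega)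
          omega
        · intro hi
          refine ⟨by omega, lt_of_lt_of_le hj (hanti i i0 (by omega) hi0)⟩
      rw [this, Finset.card_range]
    have hX : (∏ j ∈ range (mu i0), lin ((L:ℤ) - j) ((Cnt h mu j : ℤ) - i0 - 1))
        = ∏ j ∈ range (mu i0), lin ((L:ℤ) - j) 0 := by
      refine Finset.prod_congr rfl fun j hj => ?_
      rw [hCnt j (mem_range.mp hj)]
      norm_num
    have hY : (∏ j ∈ range (mu i0), lin ((L:ℤ)+1 - j) ((Cnt h mu j : ℤ) - i0 - 1))
        = ∏ j ∈ range (mu i0), lin ((L:ℤ)+1 - j) 0 := by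
      refine Finset.prod_congr rfl fun j hj => ?_
      rw [hCnt j (mem_range.mp hj)]
      norm_num
    have hUt : (∏ i ∈ Ico (i0+1) h, lin ((L:ℤ)+1 - mu i) ((i:ℤ) - i0 - 1))
        = ∏ i ∈ Ico (i0+1) h, lin ((L:ℤ)+1) ((i:ℤ) - i0 - 1) := by
      refine Finset.prod_congr rfl fun i hi => ?_
      rw [hz i hi]
      norm_num
    have hU : (∏ i ∈ Ico i0 h, lin ((L:ℤ)+1 - mu i) ((i:ℤ) - i0))
        = lin ((L:ℤ)+1 - mu i0) 0 * ∏ i ∈ Ico (i0+1) h, lin ((L:ℤ)+1) ((i:ℤ) - i0) := by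
      rw [Finset.prod_eq_prod_Ico_succ_bot hi0, sub_self ((i0:ℤ))]
      congr 1
      refine Finset.prod_congr rfl fun i hi => ?_
      rw [hz i hi]
      norm_num
    have hV : (∏ i ∈ Ico i0 h, lin ((L:ℤ)+1) ((i:ℤ) - i0))
        = lin ((L:ℤ)+1) 0 * ∏ i ∈ Ico (i0+1) h, lin ((L:ℤ)+1) ((i:ℤ) - i0) := by
      rw [Finset.prod_eq_prod_Ico_succ_bot hi0, sub_self ((i0:ℤ))]
    have hshift : lin ((L:ℤ)+1) 0 * ∏ j ∈ range (mu i0), lin ((L:ℤ) - j) 0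
        = (∏ j ∈ range (mu i0), lin ((L:ℤ)+1 - j) 0) * lin ((L:ℤ)+1 - mu i0) 0 := by
      have h1 : ∏ j ∈ range (mu i0 + 1), lin ((L:ℤ)+1 - j) 0
          = (∏ j ∈ range (mu i0), lin ((L:ℤ) - j) 0) * lin ((L:ℤ)+1) 0 := by
        rw [Finset.prod_range_succ']
        congr 1
        · refine Finset.prod_congr rfl fun j hj => ?_
          congr 1
          push_cast
          ring
        all_goals norm_num
      have h2 : ∏ j ∈ range (mu i0 + 1), lin ((L:ℤ)+1 - j) 0
          = (∏ j ∈ range (mu i0), lin ((L:ℤ)+1 - j) 0) * lin ((L:ℤ)+1 - mu i0) 0 := by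
        rw [Finset.prod_range_succ]
      rw [mul_comm] at h1
      rw [← h1, h2]
    rw [hX, hY, hUt, hU, hV]
    linear_combination ((∏ i ∈ Ico (i0+1) h, lin ((L:ℤ)+1) ((i:ℤ) - i0))
      * (∏ i ∈ Ico (i0+1) h, lin ((L:ℤ)+1) ((i:ℤ) - i0 - 1))) * hshift
  · -- step case
    push_neg at hz
    obtain ⟨iw, hiwmem, hiwne⟩ := hz
    rw [mem_Ico] at hiwmem
    set P : ℕ → Prop := fun i => i0 < i ∧ 0 < mu i with hP
    have hPiw : P iw := ⟨by omega, by omega⟩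
    set i1 := Nat.findGreatest P (h-1) with hi1def
    have hP1 : P i1 := Nat.findGreatest_spec (m := iw) (by omega) hPiw
    have hi1h : i1 < h := by
      have : i1 ≤ h - 1 := Nat.findGreatest_le _
      omega
    have hi1gt : i0 < i1 := hP1.1
    have hmax : ∀ i, i1 < i → i < h → mu i = 0 := by
      intro i hi hih
      have := Nat.findGreatest_is_greatest (P := P) hi (by omega)
      by_contra hc
      exact this ⟨by omega, by omega⟩
    obtain ⟨j0, hj0⟩ : ∃ j0, mu i1 = j0 + 1 := ⟨mu i1 - 1, by omega⟩
    have hj0c : j0 < mu i0 := by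
      have := hanti i0 i1 (by omega) hi1h
      omega
    have hCj0 : Cnt h mu j0 = i1 + 1 := by
      unfold Cnt
      have : (range h).filter (fun i => j0 < mu i) = range (i1+1) := by
        ext i
        simp only [mem_filter, mem_range]
        constructor
        · rintro ⟨hih, hji⟩
          by_contra hc
          have := hmax i (by omega) hih
          omega
        · intro hi
          have := hanti i i1 (by omega) hi1h
          exact ⟨by omega, by omega⟩
      rw [this, Finset.card_range]
    set mu' := Function.update mu i1 j0 with hmu'def
    have hmu'i1 : mu' i1 = j0 := Function.update_self _ _ _
    have hmu'ne : ∀ i, i ≠ i1 → mu' i = mu i := fun i hi => Function.update_of_ne hi _ _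
    have hmu'i0 : mu' i0 = mu i0 := hmu'ne i0 (by omega)
    have hmu'anti : ∀ i j, i ≤ j → j < h → mu' j ≤ mu' i := by
      intro i j hij hjh
      by_cases hii : i = i1 <;> by_cases hjj : j = i1
      · simp [hii, hjj]
      · rw [hii] at hij ⊢
        rw [hmu'ne j hjj, hmu'i1]
        have := hmax j (by omega) hjh
        omega
      · rw [hmu'ne i hii, hjj, hmu'i1]
        have := hanti i i1 (by rw [hjj] at hij; omega) hi1h
        omega
      · rw [hmu'ne i hii, hmu'ne j hjj]
        exact hanti i j hij hjh
    have hCnt' : ∀ j, j ≠ j0 → Cnt h mu' j = Cnt h mu j := by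
      intro j hj
      unfold Cnt
      congr 1
      ext i
      simp only [mem_filter, mem_range]
      by_cases hii : i = i1
      · rw [hii, hmu'i1, hj0]
        omega
      · rw [hmu'ne i hii]
    have hC'j0 : Cnt h mu' j0 = i1 := by
      unfold Cnt
      have : (range h).filter (fun i => j0 < mu' i) = range i1 := by
        ext i
        simp only [mem_filter, mem_range]
        by_cases hii : i = i1
        · rw [hii, hmu'i1]
          omega
        · rw [hmu'ne i hii]
          constructor
          · rintro ⟨hih, hji⟩
            by_contra hc
            have := hmax i (by omega) hih
            omega
          · intro hi
            have := hanti i i1 (by omega) hi1h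
            exact ⟨by omega, by omega⟩
      rw [this, Finset.card_range]
    have hi1mem : i1 ∈ Ico (i0+1) h := by simp [mem_Ico]; omega
    have hi1mem' : i1 ∈ Ico i0 h := by simp [mem_Ico]; omega
    have hSpos : 0 < S := by
      have h1 : mu i1 ≤ ∑ i ∈ Ico (i0+1) h, mu i :=
        Finset.single_le_sum (fun i _ => Nat.zero_le _) hi1mem
      omega
    have hsum' : ∑ i ∈ Ico (i0+1) h, mu' i = S - 1 := by
      rw [hmu'def, Finset.sum_update_of_mem hi1mem]
      have := Finset.sum_update_of_mem hi1mem (f := mu) (b := mu i1)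
      rw [Function.update_eq_self] at this
      omega
    have ih := IH (S-1) (by omega) mu' hmu'anti (by rw [hmu'i0]; exact hmuL) hsum'
    rw [hmu'i0] at ih
    -- abbreviations
    set l1 := lin ((L:ℤ) - j0) ((i1:ℤ) - i0 - 1) with hl1
    set l2 := lin ((L:ℤ)+1 - j0) ((i1:ℤ) - i0 - 1) with hl2
    set l3 := lin ((L:ℤ)+1 - j0) ((i1:ℤ) - i0) with hl3
    set l4 := lin ((L:ℤ) - j0) ((i1:ℤ) - i0) with hl4
    have hj0mem : j0 ∈ range (mu i0) := mem_range.mpr hj0c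
    have ha : (∏ j ∈ range (mu i0), lin ((L:ℤ) - j) ((Cnt h mu j : ℤ) - i0 - 1)) * l1
        = (∏ j ∈ range (mu i0), lin ((L:ℤ) - j) ((Cnt h mu' j : ℤ) - i0 - 1)) * l4 := by
      have h0 := prod_update_point hj0mem
        (fun j => lin ((L:ℤ) - j) ((Cnt h mu j : ℤ) - i0 - 1))
        (fun j => lin ((L:ℤ) - j) ((Cnt h mu' j : ℤ) - i0 - 1))
        (fun j _ hj => by simp [hCnt' j hj])
      simp only [hCj0, hC'j0] at h0
      have e1 : ((i1+1 : ℕ) : ℤ) - i0 - 1 = (i1:ℤ) - i0 := by push_cast; ring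
      rw [e1] at h0
      exact h0
    have hb : (∏ j ∈ range (mu i0), lin ((L:ℤ)+1 - j) ((Cnt h mu j : ℤ) - i0 - 1)) * l2
        = (∏ j ∈ range (mu i0), lin ((L:ℤ)+1 - j) ((Cnt h mu' j : ℤ) - i0 - 1)) * l3 := by
      have h0 := prod_update_point hj0mem
        (fun j => lin ((L:ℤ)+1 - j) ((Cnt h mu j : ℤ) - i0 - 1))
        (fun j => lin ((L:ℤ)+1 - j) ((Cnt h mu' j : ℤ) - i0 - 1))
        (fun j _ hj => by simp [hCnt' j hj])
      simp only [hCj0, hC'j0] at h0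
      have e1 : ((i1+1 : ℕ) : ℤ) - i0 - 1 = (i1:ℤ) - i0 := by push_cast; ring
      rw [e1] at h0
      exact h0
    have hc' : (∏ i ∈ Ico i0 h, lin ((L:ℤ)+1 - mu i) ((i:ℤ) - i0)) * l3
        = (∏ i ∈ Ico i0 h, lin ((L:ℤ)+1 - mu' i) ((i:ℤ) - i0)) * l4 := by
      have h0 := prod_update_point hi1mem'
        (fun i => lin ((L:ℤ)+1 - mu i) ((i:ℤ) - i0))
        (fun i => lin ((L:ℤ)+1 - mu' i) ((i:ℤ) - i0))
        (fun i _ hi => by simp [hmu'ne i hi])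
      simp only [hmu'i1, hj0] at h0
      have e1 : (L:ℤ)+1 - ((j0+1 : ℕ) : ℤ) = (L:ℤ) - j0 := by push_cast; ring
      rw [e1] at h0
      exact h0
    have hd : (∏ i ∈ Ico (i0+1) h, lin ((L:ℤ)+1 - mu i) ((i:ℤ) - i0 - 1)) * l2
        = (∏ i ∈ Ico (i0+1) h, lin ((L:ℤ)+1 - mu' i) ((i:ℤ) - i0 - 1)) * l1 := by
      have h0 := prod_update_point hi1mem
        (fun i => lin ((L:ℤ)+1 - mu i) ((i:ℤ) - i0 - 1))
        (fun i => lin ((L:ℤ)+1 - mu' i) ((i:ℤ) - i0 - 1))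
        (fun i _ hi => by simp [hmu'ne i hi])
      simp only [hmu'i1, hj0] at h0
      have e1 : (L:ℤ)+1 - ((j0+1 : ℕ) : ℤ) = (L:ℤ) - j0 := by push_cast; ring
      rw [e1] at h0
      exact h0
    have hl1ne : l1 ≠ 0 := lin_ne_zero (by omega)
    have hl2ne : l2 ≠ 0 := lin_ne_zero (by omega)
    have hl3ne : l3 ≠ 0 := lin_ne_zero (by omega)
    apply mul_right_cancel₀ (mul_ne_zero (mul_ne_zero hl1ne hl2ne) hl3ne)
    set X := ∏ j ∈ range (mu i0), lin ((L:ℤ) - j) ((Cnt h mu j : ℤ) - i0 - 1)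
    set X' := ∏ j ∈ range (mu i0), lin ((L:ℤ) - j) ((Cnt h mu' j : ℤ) - i0 - 1)
    set Y := ∏ j ∈ range (mu i0), lin ((L:ℤ)+1 - j) ((Cnt h mu j : ℤ) - i0 - 1)
    set Y' := ∏ j ∈ range (mu i0), lin ((L:ℤ)+1 - j) ((Cnt h mu' j : ℤ) - i0 - 1)
    set V := ∏ i ∈ Ico i0 h, lin ((L:ℤ)+1) ((i:ℤ) - i0)
    set Vt := ∏ i ∈ Ico (i0+1) h, lin ((L:ℤ)+1) ((i:ℤ) - i0 - 1)
    set U := ∏ i ∈ Ico i0 h, lin ((L:ℤ)+1 - mu i) ((i:ℤ) - i0)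
    set U'' := ∏ i ∈ Ico i0 h, lin ((L:ℤ)+1 - mu' i) ((i:ℤ) - i0)
    set Ut := ∏ i ∈ Ico (i0+1) h, lin ((L:ℤ)+1 - mu i) ((i:ℤ) - i0 - 1)
    set Ut' := ∏ i ∈ Ico (i0+1) h, lin ((L:ℤ)+1 - mu' i) ((i:ℤ) - i0 - 1)
    linear_combination (V*Ut*l2*l3)*ha + (X'*l4*V*l3)*hd + (l1*l3*l4)*ih
      - (Vt*l1*l3*U)*hb - (Vt*l1*l3*Y')*hc'

lemma filter_le_eq_Ico (h a : ℕ) :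
    (range h).filter (fun i => a ≤ i) = Ico a h := by
  ext i
  simp only [mem_filter, mem_range, mem_Ico]
  omega

lemma shift_col (b h i0 L : ℕ) (hi0 : i0 < h) (hLb : L < b)
    (lam : ℕ → ℕ) (hLi0 : lam i0 = L)
    (hrows_lt : ∀ i, i < i0 → lam i = b)
    (hrows_ge : ∀ i, i0 ≤ i → i < h → lam i ≤ L)
    (A : ℕ → ℕ → ℤ) (C C' : ℕ → ℕ)
    (hC : ∀ j, j ≠ L → C' j = C j) (hCL : C L = i0) (hCL' : C' L = i0 + 1) :
    (∏ i ∈ range h, ∏ j ∈ Ico (lam i) b, lin (A i j) ((i:ℤ) - C j))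
      * (∏ i ∈ Ico (i0+1) h, lin (A i L) ((i:ℤ) - i0 - 1))
    = (∏ i ∈ range h, ∏ j ∈ Ico (Function.update lam i0 (L+1) i) b, lin (A i j) ((i:ℤ) - C' j))
      * (∏ i ∈ Ico i0 h, lin (A i L) ((i:ℤ) - i0)) := by
  have e1 : (∏ i ∈ Ico (i0+1) h, lin (A i L) ((i:ℤ) - i0 - 1))
      = ∏ i ∈ range h, (if i0+1 ≤ i then lin (A i L) ((i:ℤ) - i0 - 1) else 1) := by
    rw [← Finset.prod_filter, filter_le_eq_Ico]
  have e2 : (∏ i ∈ Ico i0 h, lin (A i L) ((i:ℤ) - i0))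
      = ∏ i ∈ range h, (if i0 ≤ i then lin (A i L) ((i:ℤ) - i0) else 1) := by
    rw [← Finset.prod_filter, filter_le_eq_Ico]
  rw [e1, e2, ← Finset.prod_mul_distrib, ← Finset.prod_mul_distrib]
  refine Finset.prod_congr rfl fun i hi => ?_
  rw [mem_range] at hi
  rcases lt_trichotomy i i0 with hlt | heq | hgt
  · rw [Function.update_of_ne (by omega), hrows_lt i hlt, Ico_self]
    rw [if_neg (by omega), if_neg (by omega)]
    simp
  · subst heq
    rw [Function.update_self, if_neg (by omega), if_pos le_rfl, hLi0]
    rw [Finset.prod_eq_prod_Ico_succ_bot hLb, hCL]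
    have etail : (∏ j ∈ Ico (L+1) b, lin (A i j) ((i:ℤ) - C j))
        = ∏ j ∈ Ico (L+1) b, lin (A i j) ((i:ℤ) - C' j) := by
      refine Finset.prod_congr rfl fun j hj => ?_
      rw [mem_Ico] at hj
      rw [hC j (by omega)]
    rw [etail]
    ring
  · rw [Function.update_of_ne (by omega)]
    rw [if_pos (by omega), if_pos (by omega)]
    have hLmem : L ∈ Ico (lam i) b := by
      rw [mem_Ico]
      exact ⟨hrows_ge i (by omega) hi, hLb⟩
    have h0 := prod_update_point hLmem
      (fun j => lin (A i j) ((i:ℤ) - C j))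
      (fun j => lin (A i j) ((i:ℤ) - C' j))
      (fun j _ hj => by simp [hC j hj])
    simp only [hCL, hCL'] at h0
    have ec : (i:ℤ) - ((i0+1 : ℕ) : ℤ) = (i:ℤ) - i0 - 1 := by push_cast; ring
    rw [ec] at h0
    exact h0

lemma core (b h : ℕ) (mu : ℕ → ℕ) (hmuanti : ∀ i j, i ≤ j → j < h → mu j ≤ mu i) :
    ∀ T : ℕ, ∀ lam : ℕ → ℕ,
      (∀ i j, i ≤ j → j < h → lam j ≤ lam i) →
      (∀ i, i < h → mu i ≤ lam i) →
      (∀ i, i < h → lam i ≤ b) →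
      (∑ i ∈ range h, (b - lam i)) = T →
      (∏ i ∈ range h, ∏ j ∈ range (mu i), lin ((lam i : ℤ) - j) ((Cnt h mu j : ℤ) - i - 1))
        * (∏ i ∈ range h, ∏ j ∈ Ico (lam i) b, lin ((j:ℤ)+1) ((i:ℤ) - Cnt h lam j))
      = (∏ i ∈ range h, ∏ j ∈ Ico (lam i) b, lin ((j:ℤ)+1 - mu i) ((i:ℤ) - Cnt h lam j))
        * (∏ i ∈ range h, ∏ j ∈ range (mu i), lin ((b : ℤ) - j) ((Cnt h mu j : ℤ) - i - 1)) := by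
  intro T
  induction T using Nat.strong_induction_on with
  | _ T IH =>
  intro lam hanti hml hlb hsum
  by_cases hall : ∀ i, i < h → lam i = b
  · have hDc : (∏ i ∈ range h, ∏ j ∈ Ico (lam i) b, lin ((j:ℤ)+1) ((i:ℤ) - Cnt h lam j)) = 1 :=
      Finset.prod_eq_one fun i hi => by
        rw [hall i (mem_range.mp hi), Ico_self, Finset.prod_empty]
    have hNc : (∏ i ∈ range h, ∏ j ∈ Ico (lam i) b, lin ((j:ℤ)+1 - mu i) ((i:ℤ) - Cnt h lam j)) = 1 :=
      Finset.prod_eq_one fun i hi => by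
        rw [hall i (mem_range.mp hi), Ico_self, Finset.prod_empty]
    have hNlDl : (∏ i ∈ range h, ∏ j ∈ range (mu i), lin ((lam i : ℤ) - j) ((Cnt h mu j : ℤ) - i - 1))
        = ∏ i ∈ range h, ∏ j ∈ range (mu i), lin ((b : ℤ) - j) ((Cnt h mu j : ℤ) - i - 1) :=
      Finset.prod_congr rfl fun i hi => Finset.prod_congr rfl fun j _ => by
        rw [hall i (mem_range.mp hi)]
    rw [hDc, hNc, hNlDl]
    ring
  · push_neg at hall
    have hex : ∃ i, lam i < b ∧ i < h := by
      obtain ⟨i, hih, hine⟩ := hall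
      exact ⟨i, lt_of_le_of_ne (hlb i hih) hine, hih⟩
    set i0 := Nat.find hex with hi0def
    obtain ⟨hLb, hi0h⟩ : lam i0 < b ∧ i0 < h := Nat.find_spec hex
    set L := lam i0 with hLdef
    have hrows_lt : ∀ i, i < i0 → lam i = b := by
      intro i hi
      have h1 := Nat.find_min hex hi
      have h2 : i < h := by omega
      have := hlb i h2
      omega
    have hrows_ge : ∀ i, i0 ≤ i → i < h → lam i ≤ L := fun i hi hih => hanti i0 i hi hih
    set lam' := Function.update lam i0 (L+1) with hlam'def
    have hlam'i0 : lam' i0 = L + 1 := Function.update_self _ _ _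
    have hlam'ne : ∀ i, i ≠ i0 → lam' i = lam i := fun i hi => Function.update_of_ne hi _ _
    have hlam'anti : ∀ i j, i ≤ j → j < h → lam' j ≤ lam' i := by
      intro i j hij hjh
      by_cases hii : i = i0 <;> by_cases hjj : j = i0
      · simp [hii, hjj]
      · rw [hii] at hij ⊢
        rw [hlam'ne j hjj, hlam'i0]
        have := hrows_ge j (by omega) hjh
        omega
      · rw [hlam'ne i hii, hjj, hlam'i0]
        rw [hjj] at hij
        have := hrows_lt i (by omega)
        omega
      · rw [hlam'ne i hii, hlam'ne j hjj]
        exact hanti i j hij hjh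
    have hml' : ∀ i, i < h → mu i ≤ lam' i := by
      intro i hih
      by_cases hii : i = i0
      · rw [hii, hlam'i0]
        have := hml i0 hi0h
        omega
      · rw [hlam'ne i hii]
        exact hml i hih
    have hlb' : ∀ i, i < h → lam' i ≤ b := by
      intro i hih
      by_cases hii : i = i0
      · rw [hii, hlam'i0]
        omega
      · rw [hlam'ne i hii]
        exact hlb i hih
    have hi0mem : i0 ∈ range h := mem_range.mpr hi0h
    have hTpos : 0 < T := by
      have h1 : b - lam i0 ≤ ∑ i ∈ range h, (b - lam i) :=
        Finset.single_le_sum (f := fun i => b - lam i) (fun i _ => Nat.zero_le _) hi0mem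
      omega
    have hsum' : ∑ i ∈ range h, (b - lam' i) = T - 1 := by
      have h1 : ∑ i ∈ range h, (b - lam i)
          = (b - lam i0) + ∑ i ∈ (range h).erase i0, (b - lam i) :=
        (Finset.add_sum_erase _ _ hi0mem).symm
      have h2 : ∑ i ∈ range h, (b - lam' i)
          = (b - lam' i0) + ∑ i ∈ (range h).erase i0, (b - lam' i) :=
        (Finset.add_sum_erase _ _ hi0mem).symm
      have h3 : ∑ i ∈ (range h).erase i0, (b - lam' i)
          = ∑ i ∈ (range h).erase i0, (b - lam i) :=
        Finset.sum_congr rfl fun i hi => by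
          rw [hlam'ne i (Finset.ne_of_mem_erase hi)]
      rw [h2, h3, hlam'i0]
      omega
    have hCl : Cnt h lam L = i0 := by
      unfold Cnt
      have : (range h).filter (fun i => L < lam i) = range i0 := by
        ext i
        simp only [mem_filter, mem_range]
        constructor
        · rintro ⟨hih, hLi⟩
          by_contra hc
          have := hrows_ge i (by omega) hih
          omega
        · intro hi
          have := hrows_lt i hi
          exact ⟨by omega, by omega⟩
      rw [this, Finset.card_range]
    have hCl'ne : ∀ j, j ≠ L → Cnt h lam' j = Cnt h lam j := by
      intro j hj
      unfold Cnt
      congr 1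
      ext i
      simp only [mem_filter, mem_range]
      by_cases hii : i = i0
      · rw [hii, hlam'i0]
        omega
      · rw [hlam'ne i hii]
    have hCl'L : Cnt h lam' L = i0 + 1 := by
      unfold Cnt
      have : (range h).filter (fun i => L < lam' i) = range (i0+1) := by
        ext i
        simp only [mem_filter, mem_range]
        by_cases hii : i = i0
        · rw [hii, hlam'i0]
          omega
        · rw [hlam'ne i hii]
          constructor
          · rintro ⟨hih, hLi⟩
            by_contra hc
            have := hrows_ge i (by omega) hih
            omega
          · intro hi
            have := hrows_lt i (by omega)
            exact ⟨by omega, by omega⟩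
      rw [this, Finset.card_range]
    have ih := IH (T-1) (by omega) lam' hlam'anti hml' hlb' hsum'
    -- relation (1)
    have h1 : (∏ i ∈ range h, ∏ j ∈ range (mu i), lin ((lam i : ℤ) - j) ((Cnt h mu j : ℤ) - i - 1))
          * (∏ j ∈ range (mu i0), lin ((L:ℤ)+1 - j) ((Cnt h mu j : ℤ) - i0 - 1))
        = (∏ i ∈ range h, ∏ j ∈ range (mu i), lin ((lam' i : ℤ) - j) ((Cnt h mu j : ℤ) - i - 1))
          * (∏ j ∈ range (mu i0), lin ((L:ℤ) - j) ((Cnt h mu j : ℤ) - i0 - 1)) := by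
      have h0 := prod_update_point hi0mem
        (fun i => ∏ j ∈ range (mu i), lin ((lam i : ℤ) - j) ((Cnt h mu j : ℤ) - i - 1))
        (fun i => ∏ j ∈ range (mu i), lin ((lam' i : ℤ) - j) ((Cnt h mu j : ℤ) - i - 1))
        (fun i _ hi => by simp [hlam'ne i hi])
      simp only [hlam'i0] at h0
      have ec : ((L+1 : ℕ) : ℤ) = (L:ℤ) + 1 := by push_cast; ring
      rw [ec] at h0
      exact h0
    -- relation (2)
    have h2 := shift_col b h i0 L hi0h hLb lam rfl hrows_lt hrows_ge
      (fun i j => (j:ℤ)+1 - mu i) (Cnt h lam) (Cnt h lam') hCl'ne hCl hCl'L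
    -- relation (3)
    have h3 := shift_col b h i0 L hi0h hLb lam rfl hrows_lt hrows_ge
      (fun i j => (j:ℤ)+1) (Cnt h lam) (Cnt h lam') hCl'ne hCl hCl'L
    -- inner identity
    have hinner := inner_core L i0 h hi0h (∑ i ∈ Ico (i0+1) h, mu i) mu hmuanti
      (hml i0 hi0h) rfl
    rw [← hlam'def] at h2 h3
    have ecL : ((L:ℕ) : ℤ) + 1 = (L:ℤ) + 1 := rfl
    -- nonzero factors
    have hmuL : mu i0 ≤ L := hml i0 hi0h
    have hYne : (∏ j ∈ range (mu i0), lin ((L:ℤ)+1 - j) ((Cnt h mu j : ℤ) - i0 - 1)) ≠ 0 := by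
      rw [Finset.prod_ne_zero_iff]
      intro j hj
      rw [mem_range] at hj
      exact lin_ne_zero (by omega)
    have hVtne : (∏ i ∈ Ico (i0+1) h, lin ((L:ℤ)+1) ((i:ℤ) - i0 - 1)) ≠ 0 := by
      rw [Finset.prod_ne_zero_iff]
      intro i _
      exact lin_ne_zero (by omega)
    have hUtne : (∏ i ∈ Ico (i0+1) h, lin ((L:ℤ)+1 - mu i) ((i:ℤ) - i0 - 1)) ≠ 0 := by
      rw [Finset.prod_ne_zero_iff]
      intro i hi
      rw [mem_Ico] at hi
      have := hmuanti i0 i (by omega) hi.2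
      exact lin_ne_zero (by omega)
    apply mul_right_cancel₀ (mul_ne_zero (mul_ne_zero hYne hVtne) hUtne)
    linear_combination
      ((∏ i ∈ range h, ∏ j ∈ Ico (lam i) b, lin ((j:ℤ)+1) ((i:ℤ) - Cnt h lam j))
        * (∏ i ∈ Ico (i0+1) h, lin ((L:ℤ)+1) ((i:ℤ) - i0 - 1))
        * (∏ i ∈ Ico (i0+1) h, lin ((L:ℤ)+1 - mu i) ((i:ℤ) - i0 - 1))) * h1
      + ((∏ i ∈ range h, ∏ j ∈ range (mu i), lin ((lam' i : ℤ) - j) ((Cnt h mu j : ℤ) - i - 1))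
        * (∏ j ∈ range (mu i0), lin ((L:ℤ) - j) ((Cnt h mu j : ℤ) - i0 - 1))
        * (∏ i ∈ Ico (i0+1) h, lin ((L:ℤ)+1 - mu i) ((i:ℤ) - i0 - 1))) * h3
      + ((∏ i ∈ range h, ∏ j ∈ range (mu i), lin ((lam' i : ℤ) - j) ((Cnt h mu j : ℤ) - i - 1))
        * (∏ i ∈ range h, ∏ j ∈ Ico (lam' i) b, lin ((j:ℤ)+1) ((i:ℤ) - Cnt h lam' j))) * hinner
      + ((∏ j ∈ range (mu i0), lin ((L:ℤ)+1 - j) ((Cnt h mu j : ℤ) - i0 - 1))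
        * (∏ i ∈ Ico (i0+1) h, lin ((L:ℤ)+1) ((i:ℤ) - i0 - 1))
        * (∏ i ∈ Ico i0 h, lin ((L:ℤ)+1 - mu i) ((i:ℤ) - i0))) * ih
      - ((∏ i ∈ range h, ∏ j ∈ range (mu i), lin ((b : ℤ) - j) ((Cnt h mu j : ℤ) - i - 1))
        * (∏ j ∈ range (mu i0), lin ((L:ℤ)+1 - j) ((Cnt h mu j : ℤ) - i0 - 1))
        * (∏ i ∈ Ico (i0+1) h, lin ((L:ℤ)+1) ((i:ℤ) - i0 - 1))) * h2


lemma boxProdM_eq_prod (l : JPartition) (h : ℕ) (hl : ∀ i, h ≤ i → l.part i = 0) (f : ℕ × ℕ → K) :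
    boxProdM l f = ∏ i ∈ range h, ∏ j ∈ range (l.part i), f (i, j) := by
  apply finprod_eq_prod_of_mulSupport_subset
  intro i hi
  simp only [Function.mem_mulSupport] at hi
  by_contra hc
  simp only [coe_range, Set.mem_Iio, not_lt] at hc
  rw [hl i hc] at hi
  simp at hi

lemma conjPart_eq_Cnt (l : JPartition) (h : ℕ) (hl : ∀ i, h ≤ i → l.part i = 0) (j : ℕ) :
    l.conjPart j = Cnt h l.part j := by
  unfold JPartition.conjPart Cnt
  have hset : {i | j < l.part i} = (((range h).filter (fun i => j < l.part i) : Finset ℕ) : Set ℕ) := by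
    ext i
    simp only [Set.mem_setOf_eq, coe_filter, mem_range]
    constructor
    · intro hj
      refine ⟨?_, hj⟩
      by_contra hc
      rw [hl i (by omega)] at hj
      omega
    · exact fun hx => hx.2
  rw [hset]
  exact Nat.card_eq_finsetCard ((range h).filter (fun i => j < l.part i))

lemma card_filter_reflect (h : ℕ) (p : ℕ → Prop) [DecidablePred p] :
    ((range h).filter (fun i => p (h-1-i))).card = ((range h).filter p).card := by
  apply Finset.card_nbij (i := fun x => h-1-x)
  · intro a ha
    simp only [Finset.mem_coe, mem_filter, mem_range] at ha ⊢
    exact ⟨by omega, ha.2⟩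
  · intro x hx y hy hxy
    simp only [coe_filter, Set.mem_setOf_eq, mem_range] at hx hy
    have hxy' : h-1-x = h-1-y := hxy
    omega
  · intro y hy
    simp only [coe_filter, Set.mem_setOf_eq, mem_range] at hy
    refine ⟨h-1-y, ?_, by show h-1-(h-1-y) = y; omega⟩
    simp only [coe_filter, Set.mem_setOf_eq, mem_range]
    have he : h-1-(h-1-y) = y := by omega
    rw [he]
    exact ⟨by omega, hy.2⟩

lemma cnt_rot (b h : ℕ) (l : JPartition) (k : ℕ) (hk : k < b) :
    Cnt h (rotC b h l).part k = h - Cnt h l.part (b-1-k) := by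
  unfold Cnt
  have h1 : (range h).filter (fun i => k < (rotC b h l).part i)
      = (range h).filter (fun i => ¬ (b-1-k < l.part (h-1-i))) := by
    apply Finset.filter_congr
    intro i hi
    rw [mem_range] at hi
    simp only [rotC, if_pos hi]
    omega
  rw [h1, card_filter_reflect h (fun x => ¬ (b-1-k < l.part x)),
    Finset.filter_not, Finset.card_sdiff_of_subset (Finset.filter_subset _ _), Finset.card_range]

end Stmt5Aux


/-- For `μ ⊆ λ ⊆ β = (b^h)` with rotated complements `λ̂ ⊆ μ̂ ⊆ β`:
`c'_{λ,μ}(α)/c'_{β,μ}(α) = c'_{μ̂,λ̂}(α)/c'_{β,λ̂}(α)`. -/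
theorem stmt5 (b h : ℕ) (l m : JPartition) (h1 : m.sub l) (h2 : l.sub (rect b h)) :
    cMix' l m / cMix' (rect b h) m =
      cMix' (rotC b h m) (rotC b h l) / cMix' (rect b h) (rotC b h l) := by
  have hl0 : ∀ i, h ≤ i → l.part i = 0 := by
    intro i hi
    have := h2 i
    simp only [rect, if_neg (by omega : ¬ i < h)] at this
    omega
  have hm0 : ∀ i, h ≤ i → m.part i = 0 := by
    intro i hi
    have := h1 i
    have := hl0 i hi
    omega
  have hlamb : ∀ i, i < h → l.part i ≤ b := by
    intro i hi
    have := h2 i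
    simp only [rect, if_pos hi] at this
    exact this
  have hrot0 : ∀ i, h ≤ i → (rotC b h l).part i = 0 := by
    intro i hi
    simp [rotC, if_neg (by omega : ¬ i < h)]
  have hlanti : ∀ i j, i ≤ j → j < h → l.part j ≤ l.part i := fun i j hij _ => l.antitone' hij
  have hmanti : ∀ i j, i ≤ j → j < h → m.part j ≤ m.part i := fun i j hij _ => m.antitone' hij
  have hml : ∀ i, i < h → m.part i ≤ l.part i := fun i _ => h1 i
  have hCmle : ∀ j, Cnt h m.part j ≤ h := by
    intro j
    calc ((range h).filter _).card ≤ (range h).card := Finset.card_le_card (Finset.filter_subset _ _)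
      _ = h := Finset.card_range h
  have hClle : ∀ j, Cnt h l.part j ≤ h := by
    intro j
    calc ((range h).filter _).card ≤ (range h).card := Finset.card_le_card (Finset.filter_subset _ _)
      _ = h := Finset.card_range h
  have hlinK : ∀ (p q : ℤ), ((p:K)+1)*alpha + (q:K) = lin (p+1) q := by
    intro p q
    simp only [lin]
    push_cast
    ring
  -- E1
  have E1 : cMix' l m = ∏ i ∈ range h, ∏ j ∈ range (m.part i),
      lin ((l.part i : ℤ) - j) ((Cnt h m.part j : ℤ) - i - 1) := by
    rw [cMix', boxProdM_eq_prod m h hm0]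
    refine Finset.prod_congr rfl fun i hi => Finset.prod_congr rfl fun j hj => ?_
    rw [hlinK]
    simp only [JPartition.arm, JPartition.leg, conjPart_eq_Cnt m h hm0]
    congr 1
    ring
  -- E2
  have E2 : cMix' (rect b h) m = ∏ i ∈ range h, ∏ j ∈ range (m.part i),
      lin ((b : ℤ) - j) ((Cnt h m.part j : ℤ) - i - 1) := by
    rw [cMix', boxProdM_eq_prod m h hm0]
    refine Finset.prod_congr rfl fun i hi => Finset.prod_congr rfl fun j hj => ?_
    rw [mem_range] at hi
    rw [hlinK]
    simp only [JPartition.arm, JPartition.leg, conjPart_eq_Cnt m h hm0, rect, if_pos hi]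
    congr 1
    ring
  -- E3
  have E3 : cMix' (rotC b h m) (rotC b h l) = ∏ i ∈ range h, ∏ j ∈ Ico (l.part i) b,
      lin ((j:ℤ)+1 - m.part i) ((i:ℤ) - Cnt h l.part j) := by
    rw [cMix', boxProdM_eq_prod (rotC b h l) h hrot0]
    rw [← Finset.prod_range_reflect (fun i => ∏ j ∈ Ico (l.part i) b,
      lin ((j:ℤ)+1 - m.part i) ((i:ℤ) - Cnt h l.part j)) h]
    refine Finset.prod_congr rfl fun i hi => ?_
    rw [mem_range] at hi
    have hi' : h - 1 - i < h := by omega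
    have hpartl : (rotC b h l).part i = b - l.part (h-1-i) := by
      simp [rotC, if_pos hi]
    have hpartm : (rotC b h m).part i = b - m.part (h-1-i) := by
      simp [rotC, if_pos hi]
    rw [hpartl, Finset.prod_Ico_eq_prod_range,
      ← Finset.prod_range_reflect (fun k => lin ((↑(l.part (h-1-i) + k):ℤ)+1 - m.part (h-1-i))
        ((↑(h-1-i):ℤ) - Cnt h l.part (l.part (h-1-i) + k))) (b - l.part (h-1-i))]
    refine Finset.prod_congr rfl fun k hk => ?_
    rw [mem_range] at hk
    have hj' : l.part (h-1-i) + (b - l.part (h-1-i) - 1 - k) = b - 1 - k := by omega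
    rw [hlinK]
    rw [hj']
    simp only [JPartition.arm, JPartition.leg, hpartm,
      conjPart_eq_Cnt (rotC b h l) h hrot0, cnt_rot b h l k (by omega)]
    have hmb : m.part (h-1-i) ≤ b := le_trans (hml _ hi') (hlamb _ hi')
    have hCl := hClle (b-1-k)
    congr 1
    · omega
    · omega
  -- E4
  have E4 : cMix' (rect b h) (rotC b h l) = ∏ i ∈ range h, ∏ j ∈ Ico (l.part i) b,
      lin ((j:ℤ)+1) ((i:ℤ) - Cnt h l.part j) := by
    rw [cMix', boxProdM_eq_prod (rotC b h l) h hrot0]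
    rw [← Finset.prod_range_reflect (fun i => ∏ j ∈ Ico (l.part i) b,
      lin ((j:ℤ)+1) ((i:ℤ) - Cnt h l.part j)) h]
    refine Finset.prod_congr rfl fun i hi => ?_
    rw [mem_range] at hi
    have hpartl : (rotC b h l).part i = b - l.part (h-1-i) := by
      simp [rotC, if_pos hi]
    rw [hpartl, Finset.prod_Ico_eq_prod_range,
      ← Finset.prod_range_reflect (fun k => lin ((↑(l.part (h-1-i) + k):ℤ)+1)
        ((↑(h-1-i):ℤ) - Cnt h l.part (l.part (h-1-i) + k))) (b - l.part (h-1-i))]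
    refine Finset.prod_congr rfl fun k hk => ?_
    rw [mem_range] at hk
    have hj' : l.part (h-1-i) + (b - l.part (h-1-i) - 1 - k) = b - 1 - k := by omega
    rw [hlinK]
    rw [hj']
    simp only [JPartition.arm, JPartition.leg, rect, if_pos hi,
      conjPart_eq_Cnt (rotC b h l) h hrot0, cnt_rot b h l k (by omega)]
    have hCl := hClle (b-1-k)
    congr 1
    · omega
    · omega
  have hDlne : (∏ i ∈ range h, ∏ j ∈ range (m.part i),
      lin ((b : ℤ) - j) ((Cnt h m.part j : ℤ) - i - 1)) ≠ 0 := by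
    rw [Finset.prod_ne_zero_iff]
    intro i hi
    rw [Finset.prod_ne_zero_iff]
    intro j hj
    rw [mem_range] at hi hj
    have : m.part i ≤ b := le_trans (hml i hi) (hlamb i hi)
    exact lin_ne_zero (by omega)
  have hDcne : (∏ i ∈ range h, ∏ j ∈ Ico (l.part i) b,
      lin ((j:ℤ)+1) ((i:ℤ) - Cnt h l.part j)) ≠ 0 := by
    rw [Finset.prod_ne_zero_iff]
    intro i hi
    rw [Finset.prod_ne_zero_iff]
    intro j hj
    exact lin_ne_zero (by omega)
  rw [E1, E2, E3, E4, div_eq_div_iff hDlne hDcne]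
  exact core b h m.part hmanti (∑ i ∈ range h, (b - l.part i)) l.part hlanti hml hlamb rfl

end
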